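/- A sequence (U_{m,n})_{(m,n) ∈ ℤ×ℕ} over F_p has a finite [p,p]-kernel if and only if it is [−p,p]-automatic. In particular, the [−p,p]-kernel (the smallest set containing U closed under the operators (W_{m,n}) ↦ (W_{−pm+i, pn+j}) for 0 ≤ i,j ≤ p−1) is finite if and only if the [p,p]-kernel is finite, and each is at most four times the size of the other. -/

import Mathlib

set_option linter.unusedSectionVars false
set_option linter.unusedVariables false
set_option maxHeartbeats 1000000



/-- The `[p,p]`-kernel of `U : ℤ × ℕ → F_p`: all subsequences
`(U_{p^e m + i, p^e n + j})` for `e ≥ 0`, `0 ≤ i, j ≤ p^e - 1`. -/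
def ppKernel (p : ℕ) (U : ℤ × ℕ → ZMod p) : Set (ℤ × ℕ → ZMod p) :=
  {W | ∃ e i j : ℕ, i < p ^ e ∧ j < p ^ e ∧
    W = fun mn => U ((p : ℤ) ^ e * mn.1 + (i : ℤ), p ^ e * mn.2 + j)}

/-- The `[-p,p]`-Cartier operator `W ↦ (W_{-pm+i, pn+j})`. -/
def negOp (p : ℕ) (i j : ℕ) (W : ℤ × ℕ → ZMod p) : ℤ × ℕ → ZMod p :=
  fun mn => W (-(p : ℤ) * mn.1 + (i : ℤ), p * mn.2 + j)

/-- The `[-p,p]`-kernel of `U`: the smallest set containing `U` closed under the operators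
`W ↦ (W_{-pm+i, pn+j})` for `0 ≤ i, j ≤ p-1`. -/
def negPKernel (p : ℕ) (U : ℤ × ℕ → ZMod p) : Set (ℤ × ℕ → ZMod p) :=
  {W | ∃ L : List (ℕ × ℕ), (∀ d ∈ L, d.1 < p ∧ d.2 < p) ∧
    W = L.foldl (fun W d => negOp p d.1 d.2 W) U}

/-- `U : ℤ × ℕ → F_p` is `[-p,p]`-automatic: a DFAO computes `U (m,n)` from the pair of
digit strings given by the base-`(-p)` representation of `m` and the base-`p`
representation of `n`, padded to equal length (no common leading zero pair) and read
least significant digit first. -/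
def IsNegPPAutomatic (p : ℕ) (U : ℤ × ℕ → ZMod p) : Prop :=
  ∃ (S : Type) (_ : Fintype S) (δ : S → ℕ × ℕ → S) (s0 : S) (ω : S → ZMod p),
    ∀ (m : ℤ) (n : ℕ) (L : List (ℕ × ℕ)),
      (∀ d ∈ L, d.1 < p ∧ d.2 < p) →
      (∀ h : L ≠ [], (L.getLast h).1 ≠ 0 ∨ (L.getLast h).2 ≠ 0) →
      m = ∑ i ∈ Finset.range L.length, ((L.getD i (0, 0)).1 : ℤ) * (-(p : ℤ)) ^ i →
      (n : ℤ) = ∑ i ∈ Finset.range L.length, ((L.getD i (0, 0)).2 : ℤ) * (p : ℤ) ^ i →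
      ω (L.foldl δ s0) = U (m, n)

namespace NPP

def valA (p : ℕ) : List (ℕ × ℕ) → ℤ
  | [] => 0
  | d :: L => (d.1 : ℤ) + (-(p : ℤ)) * valA p L

def valB (p : ℕ) : List (ℕ × ℕ) → ℕ
  | [] => 0
  | d :: L => d.2 + p * valB p L

def bnd (p : ℕ) : ℕ → ℤ × ℤ
  | 0 => (0, 0)
  | e + 1 => (-(p : ℤ) * (bnd p e).2, (p : ℤ) - 1 - (p : ℤ) * (bnd p e).1)

lemma sumA (p : ℕ) (L : List (ℕ × ℕ)) :
    ∑ i ∈ Finset.range L.length, ((L.getD i (0, 0)).1 : ℤ) * (-(p : ℤ)) ^ i = valA p L := by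
  induction L with
  | nil => simp [valA]
  | cons d T ih =>
    rw [List.length_cons, Finset.sum_range_succ']
    simp only [List.getD_cons_succ, List.getD_cons_zero, pow_succ, pow_zero, one_mul, valA]
    have h : ∀ i ∈ Finset.range T.length,
        ((T.getD i (0, 0)).1 : ℤ) * ((-(p : ℤ)) ^ i * (-(p : ℤ)))
          = (-(p : ℤ)) * (((T.getD i (0, 0)).1 : ℤ) * (-(p : ℤ)) ^ i) := by intros; ring
    rw [Finset.sum_congr rfl h, ← Finset.mul_sum, ih]
    ring

lemma sumB (p : ℕ) (L : List (ℕ × ℕ)) :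
    ∑ i ∈ Finset.range L.length, ((L.getD i (0, 0)).2 : ℤ) * (p : ℤ) ^ i = (valB p L : ℤ) := by
  induction L with
  | nil => simp [valB]
  | cons d T ih =>
    rw [List.length_cons, Finset.sum_range_succ']
    simp only [List.getD_cons_succ, List.getD_cons_zero, pow_succ, pow_zero, one_mul, valB]
    have h : ∀ i ∈ Finset.range T.length,
        ((T.getD i (0, 0)).2 : ℤ) * ((p : ℤ) ^ i * (p : ℤ))
          = (p : ℤ) * (((T.getD i (0, 0)).2 : ℤ) * (p : ℤ) ^ i) := by intros; ring
    rw [Finset.sum_congr rfl h, ← Finset.mul_sum, ih]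
    push_cast
    ring

lemma valA_append (p : ℕ) (L M : List (ℕ × ℕ)) :
    valA p (L ++ M) = valA p L + (-(p : ℤ)) ^ L.length * valA p M := by
  induction L with
  | nil => simp [valA]
  | cons d T ih => simp [valA, ih, pow_succ]; ring

lemma valB_append (p : ℕ) (L M : List (ℕ × ℕ)) :
    valB p (L ++ M) = valB p L + p ^ L.length * valB p M := by
  induction L with
  | nil => simp [valB]
  | cons d T ih => simp [valB, ih, pow_succ]; ring


section
variable {p : ℕ} (hp2 : 2 ≤ p)

include hp2

lemma bnd_nonpos_nonneg (e : ℕ) : (bnd p e).1 ≤ 0 ∧ 0 ≤ (bnd p e).2 := by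
  induction e with
  | zero => simp [bnd]
  | succ e ih =>
    have hp1 : (1 : ℤ) ≤ (p : ℤ) := by exact_mod_cast Nat.one_le_of_lt hp2
    constructor
    · have : (0:ℤ) ≤ (p : ℤ) * (bnd p e).2 := mul_nonneg (by positivity) ih.2
      simpa [bnd] using by linarith
    · simp only [bnd]
      nlinarith [ih.1, ih.2]

lemma bnd_sub (e : ℕ) : (bnd p e).2 - (bnd p e).1 = (p : ℤ) ^ e - 1 := by
  induction e with
  | zero => simp [bnd]
  | succ e ih =>
    simp only [bnd, pow_succ]
    nlinarith [ih]

lemma valA_bounds (L : List (ℕ × ℕ)) (h : ∀ d ∈ L, d.1 < p) :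
    (bnd p L.length).1 ≤ valA p L ∧ valA p L ≤ (bnd p L.length).2 := by
  induction L with
  | nil => simp [valA, bnd]
  | cons d T ih =>
    have hd : (d.1 : ℤ) ≤ (p : ℤ) - 1 := by
      have := h d (by simp)
      omega
    have hd0 : (0 : ℤ) ≤ (d.1 : ℤ) := by positivity
    have iT := ih (fun x hx => h x (by simp [hx]))
    have hp0 : (0:ℤ) ≤ (p:ℤ) := by positivity
    simp only [List.length_cons, bnd, valA]
    constructor
    · nlinarith [iT.2]
    · nlinarith [iT.1]

lemma valB_lt (L : List (ℕ × ℕ)) (h : ∀ d ∈ L, d.2 < p) :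
    valB p L < p ^ L.length := by
  induction L with
  | nil => simp [valB]
  | cons d T ih =>
    have hd : d.2 < p := h d (by simp)
    have iT := ih (fun x hx => h x (by simp [hx]))
    simp only [List.length_cons, pow_succ, valB]
    have h2 : p * (valB p T + 1) ≤ p * p ^ T.length := Nat.mul_le_mul_left _ iT
    rw [Nat.mul_add, Nat.mul_one] at h2
    have h3 : p ^ T.length * p = p * p ^ T.length := Nat.mul_comm _ _
    omega

lemma exists_list : ∀ (e : ℕ) (A : ℤ) (n : ℕ), (bnd p e).1 ≤ A → A ≤ (bnd p e).2 → n < p ^ e →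
    ∃ L : List (ℕ × ℕ), L.length = e ∧ (∀ d ∈ L, d.1 < p ∧ d.2 < p) ∧
      valA p L = A ∧ valB p L = n := by
  intro e
  induction e with
  | zero =>
    intro A n h1 h2 h3
    refine ⟨[], rfl, by simp, ?_, ?_⟩
    · simp only [bnd] at h1 h2; simp [valA]; omega
    · simp at h3; simp [valB]; omega
  | succ e ih =>
    intro A n h1 h2 h3
    have hp0 : (0:ℤ) < (p:ℤ) := by exact_mod_cast (by omega : 0 < p)
    set d1 : ℕ := (A % (p:ℤ)).toNat with hd1
    have hmod0 : (0:ℤ) ≤ A % (p:ℤ) := Int.emod_nonneg A hp0.ne'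
    have hmodlt : A % (p:ℤ) < (p:ℤ) := Int.emod_lt_of_pos A hp0
    have hd1c : (d1 : ℤ) = A % (p:ℤ) := Int.toNat_of_nonneg hmod0
    have hd1lt : d1 < p := by omega
    set A' : ℤ := -(A / (p:ℤ)) with hA'
    have hAeq : (d1 : ℤ) + (-(p:ℤ)) * A' = A := by
      rw [hd1c, hA']
      have := Int.emod_add_mul_ediv A (p:ℤ)
      ring_nf
      linarith [this]
    have hPA' : (p:ℤ) * A' = (d1:ℤ) - A := by linarith [hAeq]
    -- bounds on A'
    have hub : A' ≤ (bnd p e).2 := by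
      have h1' : (bnd p (e+1)).1 = -(p:ℤ) * (bnd p e).2 := rfl
      have : (p:ℤ) * A' ≤ (d1:ℤ) + (p:ℤ) * (bnd p e).2 := by
        rw [hPA']; rw [h1'] at h1; linarith
      by_contra hc
      push_neg at hc
      have : (p:ℤ) * ((bnd p e).2 + 1) ≤ (p:ℤ) * A' := by
        apply mul_le_mul_of_nonneg_left _ hp0.le
        omega
      have hdp : (d1:ℤ) < (p:ℤ) := by exact_mod_cast hd1lt
      nlinarith
    have hlb : (bnd p e).1 ≤ A' := by
      have h2' : (bnd p (e+1)).2 = (p:ℤ) - 1 - (p:ℤ) * (bnd p e).1 := rfl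
      have : (d1:ℤ) - ((p:ℤ) - 1 - (p:ℤ) * (bnd p e).1) ≤ (p:ℤ) * A' := by
        rw [hPA']; rw [h2'] at h2; linarith
      by_contra hc
      push_neg at hc
      have : (p:ℤ) * A' ≤ (p:ℤ) * ((bnd p e).1 - 1) := by
        apply mul_le_mul_of_nonneg_left _ hp0.le
        omega
      have hd0 : (0:ℤ) ≤ (d1:ℤ) := by positivity
      nlinarith
    have hn' : n / p < p ^ e := by
      rw [Nat.div_lt_iff_lt_mul (by omega)]
      calc n < p ^ (e+1) := h3
        _ = p ^ e * p := pow_succ p e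
    obtain ⟨L, hlen, hdig, hvA, hvB⟩ := ih A' (n / p) hlb hub hn'
    refine ⟨(d1, n % p) :: L, by simp [hlen], ?_, ?_, ?_⟩
    · intro x hx
      rcases List.mem_cons.mp hx with h | h
      · subst h; exact ⟨hd1lt, Nat.mod_lt _ (by omega)⟩
      · exact hdig x h
    · simp only [valA, hvA]; exact hAeq
    · simp only [valB, hvB]
      exact Nat.mod_add_div n p


lemma bnd_grow (k : ℕ) : (bnd p (2 * k)).1 ≤ -(k : ℤ) ∧ (k : ℤ) ≤ (bnd p (2 * k)).2 := by
  induction k with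
  | zero => simp [bnd]
  | succ k ih =>
    have hp1 : (2 : ℤ) ≤ (p : ℤ) := by exact_mod_cast hp2
    have h2k : 2 * (k + 1) = (2 * k) + 1 + 1 := by ring
    rw [h2k]
    have e1 : (bnd p (2 * k + 1)).1 = -(p:ℤ) * (bnd p (2*k)).2 := rfl
    have e2 : (bnd p (2 * k + 1)).2 = (p:ℤ) - 1 - (p:ℤ) * (bnd p (2*k)).1 := rfl
    have e3 : (bnd p (2 * k + 1 + 1)).1 = -(p:ℤ) * (bnd p (2*k+1)).2 := rfl
    have e4 : (bnd p (2 * k + 1 + 1)).2 = (p:ℤ) - 1 - (p:ℤ) * (bnd p (2*k+1)).1 := rfl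
    have hb := bnd_nonpos_nonneg hp2 (2 * k)
    have hsq : (0:ℤ) ≤ (p:ℤ) * (p:ℤ) - 1 := by nlinarith
    have hA : (p:ℤ) * ((p:ℤ) * (bnd p (2*k)).1) ≤ (bnd p (2*k)).1 := by
      nlinarith [mul_nonneg (neg_nonneg.mpr hb.1) hsq]
    have hC : (bnd p (2*k)).2 ≤ (p:ℤ) * ((p:ℤ) * (bnd p (2*k)).2) := by
      nlinarith [mul_nonneg hb.2 hsq]
    have hB : (2:ℤ) ≤ (p:ℤ) * ((p:ℤ) - 1) := by nlinarith
    constructor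
    · rw [e3, e2]
      push_cast
      nlinarith [ih.1, hA, hB]
    · rw [e4, e1]
      push_cast
      nlinarith [ih.2, hC, hB]

lemma bnd_reach (m : ℤ) (n : ℕ) : ∃ e, (bnd p e).1 ≤ m ∧ m ≤ (bnd p e).2 ∧ n < p ^ e := by
  set k : ℕ := max m.natAbs n + 1 with hk
  have hm : m.natAbs ≤ k := by omega
  have h1 : -(k:ℤ) ≤ m := by omega
  have h2 : m ≤ (k:ℤ) := by omega
  refine ⟨2 * k, le_trans (bnd_grow hp2 k).1 h1, le_trans h2 (bnd_grow hp2 k).2, ?_⟩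
  calc n < 2 ^ n := Nat.lt_two_pow_self
      _ ≤ 2 ^ (2 * k) := Nat.pow_le_pow_right (by omega) (by omega)
      _ ≤ p ^ (2 * k) := Nat.pow_le_pow_left hp2 _

omit hp2 in
lemma trim (L : List (ℕ × ℕ)) (h : ∀ d ∈ L, d.1 < p ∧ d.2 < p) :
    ∃ L' : List (ℕ × ℕ), (∀ d ∈ L', d.1 < p ∧ d.2 < p) ∧
      (∀ h : L' ≠ [], (L'.getLast h).1 ≠ 0 ∨ (L'.getLast h).2 ≠ 0) ∧
      valA p L' = valA p L ∧ valB p L' = valB p L := by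
  induction L using List.reverseRecOn with
  | nil => exact ⟨[], by simp, by simp, rfl, rfl⟩
  | append_singleton M d ih =>
    by_cases hd : d = (0, 0)
    · subst hd
      obtain ⟨L', h1, h2, h3, h4⟩ := ih (fun x hx => h x (by simp [hx]))
      refine ⟨L', h1, h2, ?_, ?_⟩
      · rw [valA_append, h3]; simp [valA]
      · rw [valB_append, h4]; simp [valB]
    · refine ⟨M ++ [d], h, ?_, rfl, rfl⟩
      intro hne
      rw [List.getLast_concat]
      by_contra hc
      push_neg at hc
      apply hd
      ext <;> simp [hc.1, hc.2]

lemma exists_repr (m : ℤ) (n : ℕ) :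
    ∃ L : List (ℕ × ℕ), (∀ d ∈ L, d.1 < p ∧ d.2 < p) ∧
      (∀ h : L ≠ [], (L.getLast h).1 ≠ 0 ∨ (L.getLast h).2 ≠ 0) ∧
      valA p L = m ∧ valB p L = n := by
  obtain ⟨e, h1, h2, h3⟩ := bnd_reach hp2 m n
  obtain ⟨L, _, hdig, hvA, hvB⟩ := exists_list hp2 e m n h1 h2 h3
  obtain ⟨L', h1', h2', h3', h4'⟩ := trim L hdig
  exact ⟨L', h1', h2', h3'.trans hvA, h4'.trans hvB⟩


end

/-- key formula for iterated Cartier operators. -/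
lemma foldl_negOp (p : ℕ) (U : ℤ × ℕ → ZMod p) :
    ∀ (L : List (ℕ × ℕ)) (mn : ℤ × ℕ),
      (L.foldl (fun W d => negOp p d.1 d.2 W) U) mn
        = U ((-(p : ℤ)) ^ L.length * mn.1 + valA p L, p ^ L.length * mn.2 + valB p L) := by
  intro L
  induction L generalizing U with
  | nil => intro mn; simp [valA, valB]
  | cons d T ih =>
    intro mn
    rw [List.foldl_cons, ih]
    show negOp p d.1 d.2 U _ = _
    unfold negOp
    congr 1
    refine Prod.ext ?_ ?_
    · show -(p:ℤ) * ((-(p : ℤ)) ^ T.length * mn.1 + valA p T) + (d.1:ℤ)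
        = (-(p : ℤ)) ^ (T.length + 1) * mn.1 + valA p (d :: T)
      show _ = _ * mn.1 + ((d.1 : ℤ) + (-(p : ℤ)) * valA p T)
      ring
    · show p * (p ^ T.length * mn.2 + valB p T) + d.2 = p ^ (T.length + 1) * mn.2 + valB p (d :: T)
      show _ = _ * mn.2 + (d.2 + p * valB p T)
      ring


lemma mem_negPKernel (p : ℕ) (U : ℤ × ℕ → ZMod p) (L : List (ℕ × ℕ))
    (h : ∀ d ∈ L, d.1 < p ∧ d.2 < p) :
    (fun mn => U ((-(p : ℤ)) ^ L.length * mn.1 + valA p L, p ^ L.length * mn.2 + valB p L))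
      ∈ negPKernel p U :=
  ⟨L, h, by funext mn; rw [foldl_negOp]⟩

/-- composition with a transformation of the first variable -/
def cmp (p : ℕ) (f : ℤ → ℤ) (W : ℤ × ℕ → ZMod p) : ℤ × ℕ → ZMod p :=
  fun mn => W (f mn.1, mn.2)

lemma hi_lt (p : ℕ) (hp2 : 2 ≤ p) (e : ℕ) : (bnd p e).2 < (p : ℤ) ^ e := by
  have h1 := bnd_sub hp2 e
  have h2 := bnd_nonpos_nonneg hp2 e
  linarith [h2.1]

lemma lo_gt (p : ℕ) (hp2 : 2 ≤ p) (e : ℕ) : -(p : ℤ) ^ e < (bnd p e).1 := by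
  have h1 := bnd_sub hp2 e
  have h2 := bnd_nonpos_nonneg hp2 e
  linarith [h2.2]

lemma negP_subset {p : ℕ} (hp2 : 2 ≤ p) (U : ℤ × ℕ → ZMod p) :
    negPKernel p U ⊆ cmp p id '' ppKernel p U ∪ cmp p (· - 1) '' ppKernel p U
      ∪ cmp p (- ·) '' ppKernel p U ∪ cmp p (fun m => -m - 1) '' ppKernel p U := by
  rintro W ⟨L, hL, rfl⟩
  have hW : (L.foldl (fun W d => negOp p d.1 d.2 W) U)
      = fun mn => U ((-(p : ℤ)) ^ L.length * mn.1 + valA p L,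
          p ^ L.length * mn.2 + valB p L) := funext (foldl_negOp p U L)
  set e := L.length with he
  set A := valA p L with hA
  set B := valB p L with hB
  have hAb : (bnd p e).1 ≤ A ∧ A ≤ (bnd p e).2 := valA_bounds hp2 L (fun d hd => (hL d hd).1)
  have hBlt : B < p ^ e := valB_lt hp2 L (fun d hd => (hL d hd).2)
  have hpe : (0:ℤ) < (p:ℤ) ^ e := by positivity
  rcases Nat.even_or_odd e with hpar | hpar <;> rcases le_or_gt 0 A with hAs | hAs
  · -- even, A ≥ 0
    left; left; left
    set i : ℕ := A.toNat with hi
    have hiz : (i : ℤ) = A := Int.toNat_of_nonneg hAs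
    have hilt : i < p ^ e := by
      have : (i:ℤ) < (p:ℤ)^e := by rw [hiz]; exact lt_of_le_of_lt hAb.2 (hi_lt p hp2 e)
      exact_mod_cast (by push_cast at this ⊢; exact this : (i:ℤ) < ((p^e : ℕ) : ℤ))
    refine ⟨_, ⟨e, i, B, hilt, hBlt, rfl⟩, ?_⟩
    rw [hW]; funext mn
    simp only [cmp, id]
    congr 2
    rw [hpar.neg_pow, hiz]
  · -- even, A < 0
    left; left; right
    set i : ℕ := (A + (p:ℤ)^e).toNat with hi
    have hnn : (0:ℤ) ≤ A + (p:ℤ)^e := by linarith [lo_gt p hp2 e, hAb.1]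
    have hiz : (i : ℤ) = A + (p:ℤ)^e := Int.toNat_of_nonneg hnn
    have hilt : i < p ^ e := by
      have : (i:ℤ) < (p:ℤ)^e := by rw [hiz]; linarith
      exact_mod_cast (by push_cast at this ⊢; exact this : (i:ℤ) < ((p^e : ℕ) : ℤ))
    refine ⟨_, ⟨e, i, B, hilt, hBlt, rfl⟩, ?_⟩
    rw [hW]; funext mn
    simp only [cmp]
    congr 2
    rw [hpar.neg_pow]
    rw [hiz]
    ring
  · -- odd, A ≥ 0
    left; right
    set i : ℕ := A.toNat with hi
    have hiz : (i : ℤ) = A := Int.toNat_of_nonneg hAs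
    have hilt : i < p ^ e := by
      have : (i:ℤ) < (p:ℤ)^e := by rw [hiz]; exact lt_of_le_of_lt hAb.2 (hi_lt p hp2 e)
      exact_mod_cast (by push_cast at this ⊢; exact this : (i:ℤ) < ((p^e : ℕ) : ℤ))
    refine ⟨_, ⟨e, i, B, hilt, hBlt, rfl⟩, ?_⟩
    rw [hW]; funext mn
    simp only [cmp]
    congr 2
    rw [hpar.neg_pow, hiz]
    ring
  · -- odd, A < 0
    right
    set i : ℕ := (A + (p:ℤ)^e).toNat with hi
    have hnn : (0:ℤ) ≤ A + (p:ℤ)^e := by linarith [lo_gt p hp2 e, hAb.1]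
    have hiz : (i : ℤ) = A + (p:ℤ)^e := Int.toNat_of_nonneg hnn
    have hilt : i < p ^ e := by
      have : (i:ℤ) < (p:ℤ)^e := by rw [hiz]; linarith
      exact_mod_cast (by push_cast at this ⊢; exact this : (i:ℤ) < ((p^e : ℕ) : ℤ))
    refine ⟨_, ⟨e, i, B, hilt, hBlt, rfl⟩, ?_⟩
    rw [hW]; funext mn
    simp only [cmp]
    congr 2
    rw [hpar.neg_pow, hiz]
    ring

lemma pp_subset {p : ℕ} (hp2 : 2 ≤ p) (U : ℤ × ℕ → ZMod p) :
    ppKernel p U ⊆ cmp p id '' negPKernel p U ∪ cmp p (· + 1) '' negPKernel p U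
      ∪ cmp p (- ·) '' negPKernel p U ∪ cmp p (fun m => -m - 1) '' negPKernel p U := by
  rintro W ⟨e, i, j, hi, hj, rfl⟩
  have hiz : (i : ℤ) < (p : ℤ) ^ e := by exact_mod_cast hi
  have hizn : (0:ℤ) ≤ (i : ℤ) := Int.natCast_nonneg i
  rcases Nat.even_or_odd e with hpar | hpar <;> rcases le_or_gt ((i:ℤ)) (bnd p e).2 with hile | hile
  · -- even, small i
    left; left; left
    obtain ⟨L, hlen, hdig, hvA, hvB⟩ := exists_list hp2 e (i : ℤ) j
      (le_trans (bnd_nonpos_nonneg hp2 e).1 hizn) hile hj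
    refine ⟨_, mem_negPKernel p U L hdig, ?_⟩
    funext mn
    simp only [cmp, id, hlen, hvA, hvB]
    congr 2
    rw [hpar.neg_pow]
  · -- even, large i
    left; left; right
    obtain ⟨L, hlen, hdig, hvA, hvB⟩ := exists_list hp2 e ((i : ℤ) - (p:ℤ)^e) j
      (by have := bnd_sub hp2 e; linarith) (by linarith [(bnd_nonpos_nonneg hp2 e).2]) hj
    refine ⟨_, mem_negPKernel p U L hdig, ?_⟩
    funext mn
    simp only [cmp, hlen, hvA, hvB]
    congr 2
    rw [hpar.neg_pow]
    ring
  · -- odd, small i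
    left; right
    obtain ⟨L, hlen, hdig, hvA, hvB⟩ := exists_list hp2 e (i : ℤ) j
      (le_trans (bnd_nonpos_nonneg hp2 e).1 hizn) hile hj
    refine ⟨_, mem_negPKernel p U L hdig, ?_⟩
    funext mn
    simp only [cmp, hlen, hvA, hvB]
    congr 2
    rw [hpar.neg_pow]
    ring
  · -- odd, large i
    right
    obtain ⟨L, hlen, hdig, hvA, hvB⟩ := exists_list hp2 e ((i : ℤ) - (p:ℤ)^e) j
      (by have := bnd_sub hp2 e; linarith) (by linarith [(bnd_nonpos_nonneg hp2 e).2]) hj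
    refine ⟨_, mem_negPKernel p U L hdig, ?_⟩
    funext mn
    simp only [cmp, hlen, hvA, hvB]
    congr 2
    rw [hpar.neg_pow]
    ring

lemma bound4 {X : Type*} {A B : Set X} {f1 f2 f3 f4 : X → X}
    (h : A ⊆ f1 '' B ∪ f2 '' B ∪ f3 '' B ∪ f4 '' B) (hB : B.Finite) :
    A.Finite ∧ A.ncard ≤ 4 * B.ncard := by
  have hU : (f1 '' B ∪ f2 '' B ∪ f3 '' B ∪ f4 '' B).Finite :=
    (((hB.image f1).union (hB.image f2)).union (hB.image f3)).union (hB.image f4)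
  refine ⟨hU.subset h, ?_⟩
  have h1 : A.ncard ≤ (f1 '' B ∪ f2 '' B ∪ f3 '' B ∪ f4 '' B).ncard :=
    Set.ncard_le_ncard h hU
  have h2 := Set.ncard_union_le (f1 '' B ∪ f2 '' B ∪ f3 '' B) (f4 '' B)
  have h3 := Set.ncard_union_le (f1 '' B ∪ f2 '' B) (f3 '' B)
  have h4 := Set.ncard_union_le (f1 '' B) (f2 '' B)
  have i1 := Set.ncard_image_le (f := f1) hB
  have i2 := Set.ncard_image_le (f := f2) hB
  have i3 := Set.ncard_image_le (f := f3) hB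
  have i4 := Set.ncard_image_le (f := f4) hB
  omega

lemma negOp_mem {p : ℕ} {U W : ℤ × ℕ → ZMod p} (hW : W ∈ negPKernel p U)
    {i j : ℕ} (hi : i < p) (hj : j < p) : negOp p i j W ∈ negPKernel p U := by
  obtain ⟨L, hL, rfl⟩ := hW
  refine ⟨L ++ [(i, j)], ?_, ?_⟩
  · intro d hd
    rcases List.mem_append.mp hd with h | h
    · exact hL d h
    · simp at h; subst h; exact ⟨hi, hj⟩
  · rw [List.foldl_append]
    rfl

lemma automatic_of_finite {p : ℕ} (hp2 : 2 ≤ p) (U : ℤ × ℕ → ZMod p)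
    (h : (negPKernel p U).Finite) : IsNegPPAutomatic p U := by
  classical
  refine ⟨↥(negPKernel p U), h.fintype,
    fun s d => if hd : d.1 < p ∧ d.2 < p then ⟨negOp p d.1 d.2 s.1, negOp_mem s.2 hd.1 hd.2⟩ else s,
    ⟨U, [], by simp, rfl⟩, fun s => s.1 (0, 0), ?_⟩
  intro m n L hL _ hm hn
  set δ : ↥(negPKernel p U) → ℕ × ℕ → ↥(negPKernel p U) :=
    fun s d => if hd : d.1 < p ∧ d.2 < p then ⟨negOp p d.1 d.2 s.1, negOp_mem s.2 hd.1 hd.2⟩ else s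
    with hδ
  have key : ∀ (M : List (ℕ × ℕ)) (s : ↥(negPKernel p U)), (∀ d ∈ M, d.1 < p ∧ d.2 < p) →
      (M.foldl δ s).1 = M.foldl (fun W d => negOp p d.1 d.2 W) s.1 := by
    intro M
    induction M with
    | nil => intro s _; rfl
    | cons d T ih =>
      intro s hM
      rw [List.foldl_cons, List.foldl_cons, ih _ (fun x hx => hM x (by simp [hx]))]
      congr 1
      rw [hδ]
      simp only
      rw [dif_pos (hM d (by simp))]
  show (L.foldl δ _).1 (0, 0) = U (m, n)
  rw [key L _ hL]
  show (L.foldl (fun W d => negOp p d.1 d.2 W) U) (0, 0) = U (m, n)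
  rw [foldl_negOp]
  have hm' : m = valA p L := by rw [hm, sumA]
  have hn' : (n : ℤ) = (valB p L : ℤ) := by rw [hn, sumB]
  have hn'' : n = valB p L := by exact_mod_cast hn'
  rw [hm', hn'']
  norm_num

lemma finite_of_automatic {p : ℕ} (hp : p.Prime) (U : ℤ × ℕ → ZMod p)
    (h : IsNegPPAutomatic p U) : (negPKernel p U).Finite := by
  classical
  obtain ⟨S, fS, δ, s0, ω, hA⟩ := h
  haveI := fS
  haveI : NeZero p := ⟨hp.ne_zero⟩
  have hp2 := hp.two_le
  set rep : ℤ → ℕ → List (ℕ × ℕ) := fun m n => (exists_repr hp2 m n).choose with hrep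
  set Φ : S × ZMod p → (ℤ × ℕ → ZMod p) := fun sc mn =>
    if mn.1 = 0 ∧ mn.2 = 0 then sc.2 else ω ((rep mn.1 mn.2).foldl δ sc.1) with hΦ
  apply Set.Finite.subset (Set.finite_range Φ)
  rintro W ⟨L, hL, rfl⟩
  refine ⟨(L.foldl δ s0, (L.foldl (fun W d => negOp p d.1 d.2 W) U) (0, 0)), ?_⟩
  funext mn
  obtain ⟨m, n⟩ := mn
  by_cases h0 : m = 0 ∧ n = 0
  · rw [hΦ]
    simp only [if_pos h0]
    rw [h0.1, h0.2]
  · rw [hΦ]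
    simp only [if_neg h0]
    obtain ⟨hdig, hlast, hvA, hvB⟩ := (exists_repr hp2 m n).choose_spec
    have hvA' : valA p (rep m n) = m := hvA
    have hvB' : valB p (rep m n) = n := hvB
    have hMne : rep m n ≠ [] := by
      intro hM
      apply h0
      rw [hM] at hvA' hvB'
      simp only [valA, valB] at hvA' hvB'
      exact ⟨hvA'.symm, hvB'.symm⟩
    rw [← List.foldl_append]
    have hdig' : ∀ d ∈ L ++ rep m n, d.1 < p ∧ d.2 < p := by
      intro d hd
      rcases List.mem_append.mp hd with h | h
      · exact hL d h
      · exact hdig d h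
    have hlast' : ∀ h : L ++ rep m n ≠ [],
        ((L ++ rep m n).getLast h).1 ≠ 0 ∨ ((L ++ rep m n).getLast h).2 ≠ 0 := by
      intro hne
      rw [List.getLast_append]
      have : (rep m n).isEmpty = false := by
        simp [List.isEmpty_iff, hMne]
      rw [dif_neg (by simp [this])]
      exact hlast hMne
    have := hA (valA p (L ++ rep m n)) (valB p (L ++ rep m n)) (L ++ rep m n) hdig' hlast'
      (sumA p _).symm (sumB p _).symm
    rw [this, foldl_negOp, valA_append, valB_append, hvA', hvB']
    congr 1
    exact Prod.ext (by ring) (by ring)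

end NPP

/-- A sequence `(U_{m,n})_{(m,n) ∈ ℤ×ℕ}` over `F_p` has a finite `[p,p]`-kernel if and only
if it is `[-p,p]`-automatic.  In particular, the `[-p,p]`-kernel is finite if and only if the
`[p,p]`-kernel is finite, and each is at most four times the size of the other. -/


theorem ppKernel_finite_iff_negPPAutomatic (p : ℕ) (hp : p.Prime) (U : ℤ × ℕ → ZMod p) :
    ((ppKernel p U).Finite ↔ IsNegPPAutomatic p U)
    ∧ ((negPKernel p U).Finite ↔ (ppKernel p U).Finite)
    ∧ (negPKernel p U).ncard ≤ 4 * (ppKernel p U).ncard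
    ∧ (ppKernel p U).ncard ≤ 4 * (negPKernel p U).ncard := by
  have hp2 := hp.two_le
  have h1 : (ppKernel p U).Finite →
      (negPKernel p U).Finite ∧ (negPKernel p U).ncard ≤ 4 * (ppKernel p U).ncard :=
    fun h => NPP.bound4 (NPP.negP_subset hp2 U) h
  have h2 : (negPKernel p U).Finite →
      (ppKernel p U).Finite ∧ (ppKernel p U).ncard ≤ 4 * (negPKernel p U).ncard :=
    fun h => NPP.bound4 (NPP.pp_subset hp2 U) h
  have iff2 : (negPKernel p U).Finite ↔ (ppKernel p U).Finite :=
    ⟨fun h => (h2 h).1, fun h => (h1 h).1⟩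
  refine ⟨⟨fun h => NPP.automatic_of_finite hp2 U ((h1 h).1),
    fun ha => (h2 (NPP.finite_of_automatic hp U ha)).1⟩, iff2, ?_, ?_⟩
  · by_cases hf : (ppKernel p U).Finite
    · exact (h1 hf).2
    · have hninf : ¬ (negPKernel p U).Finite := fun h => hf (iff2.mp h)
      rw [Set.Infinite.ncard hninf]
      omega
  · by_cases hf : (negPKernel p U).Finite
    · exact (h2 hf).2
    · have hninf : ¬ (ppKernel p U).Finite := fun h => hf (iff2.mpr h)
      rw [Set.Infinite.ncard hninf]
      omega
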